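/- For a Tychonoff space X the following are equivalent: (i) X is an s_ℝ-space; (ii) for every locally compact sequential Tychonoff space K the product X × K is an s_ℝ-space; (iii) for every locally compact sequential Tychonoff space K, each sequentially continuous function f : X × K → ℝ is continuous. -/

import Mathlib

open Set Filter Topology

/-- A set `H` of continuous real-valued functions is equicontinuous. -/
def EquicontinuousSet {X : Type*} [TopologicalSpace X] (H : Set C(X, ℝ)) : Prop :=
  ∀ x : X, ∀ ε : ℝ, 0 < ε → ∃ U ∈ 𝓝 x, ∀ x' ∈ U, ∀ f ∈ H, |f x' - f x| < ε

/-- `X` is Ascoli: every compact subset of `C_k(X)` is equicontinuous. -/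
def AscoliSpace (X : Type*) [TopologicalSpace X] : Prop :=
  ∀ K : Set C(X, ℝ), IsCompact K → EquicontinuousSet K

/-- `X` is sequentially Ascoli: every convergent sequence in `C_k(X)` is equicontinuous. -/
def SeqAscoliSpace (X : Type*) [TopologicalSpace X] : Prop :=
  ∀ (f : ℕ → C(X, ℝ)) (g : C(X, ℝ)), Tendsto f atTop (𝓝 g) →
    EquicontinuousSet (Set.range f ∪ {g})

/-- A function is `k`-continuous if its restriction to every compact subset is continuous. -/
def KContinuous {X Y : Type*} [TopologicalSpace X] [TopologicalSpace Y] (f : X → Y) : Prop :=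
  ∀ K : Set X, IsCompact K → ContinuousOn f K

/-- `X` is a `k_ℝ`-space if every `k`-continuous real-valued function is continuous. -/
def KRSpace (X : Type*) [TopologicalSpace X] : Prop :=
  ∀ f : X → ℝ, KContinuous f → Continuous f

/-- `X` is an `s_ℝ`-space if every sequentially continuous real-valued function is continuous. -/
def SRSpace (X : Type*) [TopologicalSpace X] : Prop :=
  ∀ f : X → ℝ, SeqContinuous f → Continuous f

/-- A function on a product is separately continuous. -/
def SeparatelyContinuous {X K : Type*} [TopologicalSpace X] [TopologicalSpace K]
    (Φ : X × K → ℝ) : Prop :=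
  (∀ x : X, Continuous fun k => Φ (x, k)) ∧ (∀ k : K, Continuous fun x => Φ (x, k))

/-- `X` is pseudocompact: every continuous real-valued function on `X` is bounded. -/
def Pseudocompact (X : Type*) [TopologicalSpace X] : Prop :=
  ∀ f : X → ℝ, Continuous f → ∃ M : ℝ, ∀ x : X, |f x| ≤ M

/-- A subset `A` of `X` is functionally bounded if every continuous real-valued
function on `X` is bounded on `A`. -/
def FunctionallyBounded {X : Type*} [TopologicalSpace X] (A : Set X) : Prop :=
  ∀ f : X → ℝ, Continuous f → ∃ M : ℝ, ∀ a ∈ A, |f a| ≤ M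

/-- An `R`-quotient map: a continuous surjection such that real-valued functions on the
codomain are continuous as soon as their composition with the map is continuous. -/
def RQuotientMap {X Y : Type*} [TopologicalSpace X] [TopologicalSpace Y] (p : X → Y) : Prop :=
  Continuous p ∧ Function.Surjective p ∧ ∀ φ : Y → ℝ, Continuous (φ ∘ p) → Continuous φ

section AuxLemmas

open Set Filter Topology

/-- In a Hausdorff sequential space, every compact set is sequentially compact. -/
lemma aux_isSeqCompact_of_isCompact {K : Type*} [TopologicalSpace K] [T2Space K]
    [SequentialSpace K] {C : Set K} (hC : IsCompact C) {u : ℕ → K} (hu : ∀ n, u n ∈ C) :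
    ∃ a ∈ C, ∃ φ : ℕ → ℕ, StrictMono φ ∧ Tendsto (u ∘ φ) atTop (𝓝 a) := by
  by_contra h
  push_neg at h
  -- every tail image is sequentially closed
  have hclosed : ∀ m : ℕ, IsSeqClosed (u '' Set.Ici m) := by
    intro m v y hv hvy
    choose k hk1 hk2 using hv
    by_cases hcase : ∃ c, ∃ᶠ j in atTop, k j = c
    · obtain ⟨c, hc⟩ := hcase
      obtain ⟨φ, hφ, hφc⟩ := extraction_of_frequently_atTop hc
      have ht : Tendsto (v ∘ φ) atTop (𝓝 y) := hvy.comp hφ.tendsto_atTop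
      have hconst : (v ∘ φ) = fun _ => u c := by
        funext j
        simp only [Function.comp_apply]
        rw [← hk2 (φ j), hφc j]
      have hyc : y = u c := by
        refine tendsto_nhds_unique ht ?_
        rw [hconst]; exact tendsto_const_nhds
      refine ⟨c, ?_, hyc.symm⟩
      have := hk1 (φ 0)
      rwa [hφc 0] at this
    · push_neg at hcase
      have htop : Tendsto k atTop atTop := by
        rw [tendsto_atTop]
        intro b
        have hev : ∀ᶠ j in atTop, ∀ c ∈ Finset.range b, k j ≠ c := by
          rw [Filter.eventually_all_finset]
          intro c _
          exact hcase c
        filter_upwards [hev] with j hj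
        by_contra hlt
        exact hj (k j) (Finset.mem_range.mpr (not_le.mp hlt)) rfl
      obtain ⟨ψ, hψ, hkψ⟩ := strictMono_subseq_of_tendsto_atTop htop
      have heq : u ∘ (k ∘ ψ) = v ∘ ψ := by
        funext j
        simp only [Function.comp_apply]
        exact hk2 (ψ j)
      have hsub : Tendsto (u ∘ (k ∘ ψ)) atTop (𝓝 y) := by
        rw [heq]; exact hvy.comp hψ.tendsto_atTop
      have hyC : y ∈ C := hC.isClosed.isSeqClosed (fun j => hu _) hsub
      exact absurd hsub (h y hyC _ hkψ)
  have hA : ∀ m, IsClosed (u '' Set.Ici m) := fun m => (hclosed m).isClosed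
  obtain ⟨y, hy⟩ :=
    IsCompact.nonempty_iInter_of_sequence_nonempty_isCompact_isClosed (fun m => u '' Set.Ici m)
      (fun m => Set.image_mono (f := u) (Set.Ici_subset_Ici.mpr (Nat.le_succ m)))
      (fun m => ⟨u m, m, le_refl m, rfl⟩)
      (hC.of_isClosed_subset (hA 0) (Set.image_subset_iff.mpr (fun n _ => hu n)))
      hA
  simp only [Set.mem_iInter] at hy
  have hfreq : ∃ᶠ n in atTop, u n = y := by
    rw [frequently_atTop]
    intro m
    obtain ⟨n, hn, hun⟩ := hy m
    exact ⟨n, hn, hun⟩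
  obtain ⟨φ, hφ, hφy⟩ := extraction_of_frequently_atTop hfreq
  have htend : Tendsto (u ∘ φ) atTop (𝓝 y) := by
    have : u ∘ φ = fun _ => y := funext fun j => hφy j
    rw [this]; exact tendsto_const_nhds
  have hyC : y ∈ C := by
    obtain ⟨n, _, hn⟩ := hy 0
    exact hn ▸ hu n
  exact h y hyC φ hφ htend

end AuxLemmas

section KeyLemmas

open Set Filter Topology

/-- The hard direction: the product of an `s_ℝ`-space with a locally compact
sequential Hausdorff space is an `s_ℝ`-space. -/
lemma aux_sRSpace_prod {X : Type*} [TopologicalSpace X] (hX : SRSpace X)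
    (K : Type*) [TopologicalSpace K] [T2Space K] [LocallyCompactSpace K]
    [SequentialSpace K] : SRSpace (X × K) := by
  intro f hf
  rw [continuous_iff_continuousAt]
  rintro ⟨x₀, k₀⟩
  obtain ⟨C, hCcpt, hCnhds⟩ := exists_compact_mem_nhds k₀
  haveI : CompactSpace C := isCompact_iff_compactSpace.mp hCcpt
  -- each section `f (x, ·)` is continuous since `K` is sequential
  have hsec : ∀ x : X, Continuous fun k => f (x, k) := by
    intro x
    apply SeqContinuous.continuous
    intro v a hv
    exact hf (tendsto_const_nhds.prodMk_nhds hv)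
  set Φ : X → C(C, ℝ) := fun x => ⟨fun k => f (x, (k : K)), (hsec x).comp continuous_subtype_val⟩
    with hΦdef
  -- `Φ` is "sequentially continuous" into the sup metric
  have hΦ : ∀ (x : ℕ → X) (a : X), Tendsto x atTop (𝓝 a) →
      Tendsto (fun n => dist (Φ (x n)) (Φ a)) atTop (𝓝 0) := by
    intro x a hx
    by_contra hcon
    rw [Metric.tendsto_atTop] at hcon
    push_neg at hcon
    obtain ⟨ε, hε, hεn⟩ := hcon
    have hfreq : ∃ᶠ n in atTop, ε ≤ dist (Φ (x n)) (Φ a) := by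
      rw [frequently_atTop]
      intro m
      obtain ⟨n, hn, hdist⟩ := hεn m
      refine ⟨n, hn, ?_⟩
      rwa [Real.dist_eq, sub_zero, abs_of_nonneg dist_nonneg] at hdist
    obtain ⟨φ, hφ, hφε⟩ := extraction_of_frequently_atTop hfreq
    -- pick witnessing points in `C`
    have hex : ∀ j : ℕ, ∃ k : C, ε ≤ dist (f (x (φ j), (k : K))) (f (a, (k : K))) := by
      intro j
      by_contra hall
      push_neg at hall
      have : dist (Φ (x (φ j))) (Φ a) < ε :=
        (ContinuousMap.dist_lt_iff hε).mpr (fun k => hall k)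
      exact absurd this (not_lt.mpr (hφε j))
    choose k hk using hex
    obtain ⟨b, hbC, ψ, hψ, hkb⟩ :=
      aux_isSeqCompact_of_isCompact hCcpt (u := fun j => ((k j : K))) (fun j => (k j).2)
    have hxψ : Tendsto (fun i => x (φ (ψ i))) atTop (𝓝 a) :=
      hx.comp (hφ.comp hψ).tendsto_atTop
    have t1 : Tendsto (fun i => f (x (φ (ψ i)), ((k (ψ i) : K)))) atTop (𝓝 (f (a, b))) :=
      hf (hxψ.prodMk_nhds hkb)
    have t2 : Tendsto (fun i => f (a, ((k (ψ i) : K)))) atTop (𝓝 (f (a, b))) :=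
      ((hsec a).tendsto b).comp hkb
    have t3 : Tendsto (fun i => dist (f (x (φ (ψ i)), ((k (ψ i) : K))))
        (f (a, ((k (ψ i) : K))))) atTop (𝓝 0) := by
      have := t1.dist t2
      rwa [dist_self] at this
    have : ε ≤ 0 := ge_of_tendsto t3 (Eventually.of_forall fun i => hk (ψ i))
    linarith
  -- `g` is real-valued, sequentially continuous, hence continuous
  set g : X → ℝ := fun x => dist (Φ x) (Φ x₀) with hgdef
  have hg_seq : SeqContinuous g := by
    intro x a hx
    rw [tendsto_iff_dist_tendsto_zero]
    refine squeeze_zero (fun n => dist_nonneg) (fun n => ?_) (hΦ x a hx)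
    simp only [hgdef, Real.dist_eq]
    exact abs_dist_sub_le (Φ (x n)) (Φ a) (Φ x₀)
  have hg_cont : Continuous g := hX g hg_seq
  have hg0 : g x₀ = 0 := dist_self _
  -- now prove continuity at `(x₀, k₀)`
  rw [ContinuousAt, Metric.tendsto_nhds]
  intro ε hε
  have hV : ∀ᶠ kk in 𝓝 k₀, dist (f (x₀, kk)) (f (x₀, k₀)) < ε / 2 :=
    Metric.tendsto_nhds.mp ((hsec x₀).tendsto k₀) (ε / 2) (by linarith)
  have hU : ∀ᶠ x in 𝓝 x₀, g x < ε / 2 := by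
    have := Metric.tendsto_nhds.mp (hg_cont.tendsto x₀) (ε / 2) (by linarith)
    filter_upwards [this] with x hx
    rw [hg0, Real.dist_eq, sub_zero, abs_of_nonneg dist_nonneg] at hx
    exact hx
  have h1 : ∀ᶠ p : X × K in 𝓝 (x₀, k₀), g p.1 < ε / 2 := hU.prod_inl_nhds k₀
  have h2 : ∀ᶠ p : X × K in 𝓝 (x₀, k₀), dist (f (x₀, p.2)) (f (x₀, k₀)) < ε / 2 :=
    hV.prod_inr_nhds x₀
  have h3 : ∀ᶠ p : X × K in 𝓝 (x₀, k₀), p.2 ∈ C :=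
    (show ∀ᶠ kk in 𝓝 k₀, kk ∈ C from hCnhds).prod_inr_nhds x₀
  filter_upwards [h1, h2, h3] with p hp1 hp2 hp3
  have hstep : dist (f p) (f (x₀, p.2)) ≤ g p.1 := by
    have := ContinuousMap.dist_apply_le_dist (f := Φ p.1) (g := Φ x₀) (⟨p.2, hp3⟩ : C)
    simpa [hΦdef, hgdef] using this
  calc dist (f p) (f (x₀, k₀))
      ≤ dist (f p) (f (x₀, p.2)) + dist (f (x₀, p.2)) (f (x₀, k₀)) := dist_triangle _ _ _
    _ < ε / 2 + ε / 2 := by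
        exact add_lt_add (lt_of_le_of_lt hstep hp1) hp2
    _ = ε := by ring

end KeyLemmas


section EasyDirection

open Set Filter Topology

lemma aux_back {X : Type u} [TopologicalSpace X]
    (h : SRSpace (X × PUnit.{v + 1})) : SRSpace X := by
  intro f hf
  have hF : SeqContinuous fun p : X × PUnit.{v + 1} => f p.1 := by
    intro u a hu
    exact hf ((continuous_fst.tendsto a).comp hu)
  have hc : Continuous fun x : X => (x, PUnit.unit) := continuous_id.prodMk continuous_const
  exact (h _ hF).comp hc

end EasyDirection

theorem sRSpace_iff_prod_locallyCompact_sequential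
    {X : Type u} [TopologicalSpace X] [T35Space X] :
    (SRSpace X ↔
      ∀ (K : Type v) [TopologicalSpace K] [T35Space K] [LocallyCompactSpace K]
        [SequentialSpace K], SRSpace (X × K)) ∧
    (SRSpace X ↔
      ∀ (K : Type v) [TopologicalSpace K] [T35Space K] [LocallyCompactSpace K]
        [SequentialSpace K], ∀ f : X × K → ℝ, SeqContinuous f → Continuous f) := by
  have fwd : SRSpace X →
      ∀ (K : Type v) [TopologicalSpace K] [T35Space K] [LocallyCompactSpace K]
        [SequentialSpace K], SRSpace (X × K) := by
    intro hX K _ _ _ _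
    exact aux_sRSpace_prod hX K
  have bwd : (∀ (K : Type v) [TopologicalSpace K] [T35Space K] [LocallyCompactSpace K]
      [SequentialSpace K], SRSpace (X × K)) → SRSpace X :=
    fun h => aux_back (h PUnit.{v + 1})
  exact ⟨⟨fwd, bwd⟩, ⟨fwd, bwd⟩⟩
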